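/- Let E be a finite-dimensional real normed vector space, U ⊆ E an open set, A : U → (E →L[ℝ] Mₙ(ℝ)) a continuously differentiable Mₙ(ℝ)-valued 1-form, and u : U → GLₙ(ℝ) a twice continuously differentiable map. Define the curvature of A by F_A(x)(v,w) := (DA)(x)(v)(w) − (DA)(x)(w)(v) + A(x)(v)·A(x)(w) − A(x)(w)·A(x)(v), and the dressed potential Â(x)(v) := u(x)⁻¹ A(x)(v) u(x) + u(x)⁻¹ (Du)(x)(v). Then the curvature of the dressed potential equals the conjugated curvature: F_Â(x)(v,w) = u(x)⁻¹ · F_A(x)(v,w) · u(x) for all x ∈ U and v, w ∈ E. -/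

import Mathlib

open Matrix ContinuousLinearMap

attribute [local instance] Matrix.linftyOpNormedAddCommGroup Matrix.linftyOpNormedRing
  Matrix.linftyOpNormedAlgebra

noncomputable section

variable {E : Type*} [NormedAddCommGroup E] [NormedSpace ℝ E]

/-- The curvature 2-form of an `Mₙ(ℝ)`-valued 1-form `A`:
`F_A(x)(v,w) = (DA)(x)(v)(w) − (DA)(x)(w)(v) + A(x)(v)·A(x)(w) − A(x)(w)·A(x)(v)`. -/
def curv {n : ℕ} (A : E → (E →L[ℝ] Matrix (Fin n) (Fin n) ℝ)) :
    E → E → E → Matrix (Fin n) (Fin n) ℝ :=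
  fun x v w =>
    fderiv ℝ A x v w - fderiv ℝ A x w v + A x v * A x w - A x w * A x v

/-- The dressed potential `Â(x)(v) = u(x)⁻¹ A(x)(v) u(x) + u(x)⁻¹ (Du)(x)(v)`. -/
def dressed {n : ℕ} (A : E → (E →L[ℝ] Matrix (Fin n) (Fin n) ℝ))
    (u : E → GL (Fin n) ℝ) : E → (E →L[ℝ] Matrix (Fin n) (Fin n) ℝ) :=
  fun x =>
    (ContinuousLinearMap.mul ℝ (Matrix (Fin n) (Fin n) ℝ) (↑(u x)⁻¹ : Matrix (Fin n) (Fin n) ℝ)).comp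
      (HAdd.hAdd (α := E →L[ℝ] Matrix (Fin n) (Fin n) ℝ) (β := E →L[ℝ] Matrix (Fin n) (Fin n) ℝ)
        (((ContinuousLinearMap.mul ℝ (Matrix (Fin n) (Fin n) ℝ)).flip
          ((u x : Matrix (Fin n) (Fin n) ℝ))).comp (A x))
        (fderiv ℝ (fun y => (u y : Matrix (Fin n) (Fin n) ℝ)) x))

instance clmMatrixNormedAddCommGroup {n : ℕ} :
    NormedAddCommGroup (E →L[ℝ] Matrix (Fin n) (Fin n) ℝ) :=
  ContinuousLinearMap.toNormedAddCommGroup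

instance clmMatrixNormedSpace {n : ℕ} :
    NormedSpace ℝ (E →L[ℝ] Matrix (Fin n) (Fin n) ℝ) :=
  ContinuousLinearMap.toNormedSpace

/-- The curvature of the dressed potential `Â = u⁻¹Au + u⁻¹Du` equals the conjugated
curvature: `F_Â(x)(v,w) = u(x)⁻¹ F_A(x)(v,w) u(x)` on `U`. -/
theorem stmt_2 [FiniteDimensional ℝ E] {n : ℕ} (U : Set E) (hU : IsOpen U)
    (A : E → (E →L[ℝ] Matrix (Fin n) (Fin n) ℝ)) (u : E → GL (Fin n) ℝ)
    (hA : ContDiffOn ℝ 1 A U)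
    (hu : ContDiffOn ℝ 2 (fun y => (u y : Matrix (Fin n) (Fin n) ℝ)) U) :
    ∀ x ∈ U, ∀ v w : E,
      curv (dressed A u) x v w
        = (↑(u x)⁻¹ : Matrix (Fin n) (Fin n) ℝ) * curv A x v w * (u x : Matrix (Fin n) (Fin n) ℝ) := by

  intro x hx v w
  have hnx : U ∈ nhds x := hU.mem_nhds hx
  have hdA : DifferentiableAt ℝ A x := (hA.contDiffAt hnx).differentiableAt one_ne_zero
  have hdg : DifferentiableAt ℝ (fun y => (u y : Matrix (Fin n) (Fin n) ℝ)) x :=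
    (hu.contDiffAt hnx).differentiableAt two_ne_zero
  have hBd : DifferentiableAt ℝ (fderiv ℝ (fun y => (u y : Matrix (Fin n) (Fin n) ℝ))) x :=
    (((hu.fderiv_of_isOpen hU (le_refl 2)).contDiffAt hnx).differentiableAt one_ne_zero)
  -- derivative of the pointwise inverse
  have hgi : HasFDerivAt (fun y => (↑(u y)⁻¹ : Matrix (Fin n) (Fin n) ℝ))
      ((-mulLeftRight ℝ _ (↑(u x)⁻¹ : Matrix (Fin n) (Fin n) ℝ) (↑(u x)⁻¹ : Matrix (Fin n) (Fin n) ℝ)).comp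
        (fderiv ℝ (fun y => (u y : Matrix (Fin n) (Fin n) ℝ)) x)) x := by
    have h1 := (hasFDerivAt_ringInverse (𝕜 := ℝ) (u x)).comp x hdg.hasFDerivAt
    have h2 : (fun y => (↑(u y)⁻¹ : Matrix (Fin n) (Fin n) ℝ))
        = Ring.inverse ∘ (fun y => (u y : Matrix (Fin n) (Fin n) ℝ)) :=
      funext fun y => (Ring.inverse_unit (u y)).symm
    rw [h2]
    exact h1
  -- differentiability of the dressed potential
  have hdressed : DifferentiableAt ℝ (dressed A u) x := by
    unfold dressed
    exact ((differentiableAt_const _).clm_apply hgi.differentiableAt).clm_comp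
      ((((differentiableAt_const _).clm_apply hdg).clm_comp hdA).add hBd)
  -- evaluation of the derivative of the dressed potential
  have heval : ∀ v' w' : E, fderiv ℝ (dressed A u) x v' w'
      = fderiv ℝ (fun y => dressed A u y w') x v' := by
    intro v' w'
    erw [fderiv_clm_apply hdressed (differentiableAt_const w')]
    simp
    erw [ContinuousLinearMap.comp_zero, zero_add]
    rfl
  -- explicit derivative of  y ↦ dressed A u y w'
  have hder : ∀ v' w' : E, fderiv ℝ (fun y => dressed A u y w') x v'
      = (↑(u x)⁻¹ : Matrix (Fin n) (Fin n) ℝ) * (A x w' * fderiv ℝ (fun y => (u y : Matrix (Fin n) (Fin n) ℝ)) x v')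
        + (↑(u x)⁻¹ : Matrix (Fin n) (Fin n) ℝ) * (fderiv ℝ A x v' w' * (u x : Matrix (Fin n) (Fin n) ℝ))
        + (↑(u x)⁻¹ : Matrix (Fin n) (Fin n) ℝ) * (fderiv ℝ (fderiv ℝ (fun y => (u y : Matrix (Fin n) (Fin n) ℝ))) x v' w')
        + -((↑(u x)⁻¹ : Matrix (Fin n) (Fin n) ℝ) * fderiv ℝ (fun y => (u y : Matrix (Fin n) (Fin n) ℝ)) x v' * (↑(u x)⁻¹ : Matrix (Fin n) (Fin n) ℝ)
            * (A x w' * (u x : Matrix (Fin n) (Fin n) ℝ) + fderiv ℝ (fun y => (u y : Matrix (Fin n) (Fin n) ℝ)) x w')) := by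
    intro v' w'
    have hAw : HasFDerivAt (fun y => A y w')
        ((ContinuousLinearMap.apply ℝ (Matrix (Fin n) (Fin n) ℝ) w').comp (fderiv ℝ A x)) x :=
      ((ContinuousLinearMap.apply ℝ (Matrix (Fin n) (Fin n) ℝ) w').hasFDerivAt).comp x hdA.hasFDerivAt
    have hBw : HasFDerivAt (fun y => fderiv ℝ (fun z => (u z : Matrix (Fin n) (Fin n) ℝ)) y w')
        ((ContinuousLinearMap.apply ℝ (Matrix (Fin n) (Fin n) ℝ) w').comp
          (fderiv ℝ (fderiv ℝ (fun z => (u z : Matrix (Fin n) (Fin n) ℝ))) x)) x :=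
      ((ContinuousLinearMap.apply ℝ (Matrix (Fin n) (Fin n) ℝ) w').hasFDerivAt).comp x hBd.hasFDerivAt
    have hF := hgi.mul' ((hAw.mul' hdg.hasFDerivAt).add hBw)
    have hfun : (fun y => dressed A u y w')
        = fun y => (↑(u y)⁻¹ : Matrix (Fin n) (Fin n) ℝ)
            * (A y w' * (u y : Matrix (Fin n) (Fin n) ℝ) + fderiv ℝ (fun z => (u z : Matrix (Fin n) (Fin n) ℝ)) y w') := rfl
    rw [hfun]
    erw [hF.fderiv]
    show (↑(u x)⁻¹ : Matrix (Fin n) (Fin n) ℝ) * (A x w' * fderiv ℝ (fun y => (u y : Matrix (Fin n) (Fin n) ℝ)) x v'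
        + fderiv ℝ A x v' w' * (u x : Matrix (Fin n) (Fin n) ℝ)
        + fderiv ℝ (fderiv ℝ (fun y => (u y : Matrix (Fin n) (Fin n) ℝ))) x v' w')
      + -((↑(u x)⁻¹ : Matrix (Fin n) (Fin n) ℝ) * fderiv ℝ (fun y => (u y : Matrix (Fin n) (Fin n) ℝ)) x v'
          * (↑(u x)⁻¹ : Matrix (Fin n) (Fin n) ℝ))
        * (A x w' * (u x : Matrix (Fin n) (Fin n) ℝ) + fderiv ℝ (fun y => (u y : Matrix (Fin n) (Fin n) ℝ)) x w') = _
    simp only [ContinuousLinearMap.add_apply, ContinuousLinearMap.coe_comp',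
      Function.comp_apply, ContinuousLinearMap.coe_smul', Pi.smul_apply,
      ContinuousLinearMap.smulRight_apply, ContinuousLinearMap.apply_apply,
      ContinuousLinearMap.neg_apply, mulLeftRight_apply, smul_eq_mul, neg_mul, mul_add,
      mul_assoc]
    abel
  -- value of the dressed potential
  have hval : ∀ v' : E, dressed A u x v'
      = (↑(u x)⁻¹ : Matrix (Fin n) (Fin n) ℝ) * (A x v' * (u x : Matrix (Fin n) (Fin n) ℝ)
          + fderiv ℝ (fun y => (u y : Matrix (Fin n) (Fin n) ℝ)) x v') := fun _ => rfl
  -- symmetry of the second derivative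
  have hsymm : fderiv ℝ (fderiv ℝ (fun y => (u y : Matrix (Fin n) (Fin n) ℝ))) x w v
      = fderiv ℝ (fderiv ℝ (fun y => (u y : Matrix (Fin n) (Fin n) ℝ))) x v w :=
    ((hu.contDiffAt hnx).isSymmSndFDerivAt (by simp [minSmoothness_of_isRCLikeNormedField])) w v
  have hba : (u x : Matrix (Fin n) (Fin n) ℝ) * (↑(u x)⁻¹ : Matrix (Fin n) (Fin n) ℝ) = 1 := Units.mul_inv _
  have h1 : ∀ z : Matrix (Fin n) (Fin n) ℝ, z * (u x : Matrix (Fin n) (Fin n) ℝ) * (↑(u x)⁻¹ : Matrix (Fin n) (Fin n) ℝ) = z := fun z => by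
    rw [mul_assoc, hba, mul_one]
  simp only [curv]
  rw [heval v w, heval w v, hder v w, hder w v, hsymm, hval v, hval w]
  simp only [mul_add, add_mul, neg_mul, mul_neg, sub_eq_add_neg, neg_add, neg_neg,
    ← mul_assoc, h1]
  abel

end
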